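/- Let K be a compact Hausdorff space and s₀ ∈ K an accumulation point of a countably infinite subset of K. Then X = {f ∈ C(K) : f is constant on some neighbourhood of s₀} is a proper dense sublattice of C(K) with respect to the supremum norm. -/

import Mathlib

open Filter Set Metric

/-- if `s₀` is an accumulation point of a countably infinite
subset of the compact Hausdorff space `K`, then
`X = {f ∈ C(K) : f is constant on a neighbourhood of s₀}` is a proper dense
sublattice of `C(K)` (with the supremum-norm topology). -/
theorem stmt14 {K : Type*} [TopologicalSpace K] [CompactSpace K] [T2Space K]
    (s₀ : K) (S : Set K) (hS : S.Countable) (hSinf : S.Infinite)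
    (hacc : AccPt s₀ (Filter.principal S))
    (X : Set C(K, ℝ))
    (hX : X = {f : C(K, ℝ) | ∃ U ∈ nhds s₀, ∀ t ∈ U, f t = f s₀}) :
    -- `X` is a sublattice (and linear subspace) of `C(K)`:
    ((0 : C(K, ℝ)) ∈ X ∧
     (∀ f ∈ X, ∀ g ∈ X, f + g ∈ X) ∧
     (∀ (c : ℝ), ∀ f ∈ X, c • f ∈ X) ∧
     (∀ f ∈ X, ∀ g ∈ X, f ⊔ g ∈ X) ∧
     (∀ f ∈ X, ∀ g ∈ X, f ⊓ g ∈ X)) ∧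
    -- proper:
    X ≠ Set.univ ∧
    -- dense:
    Dense X := by
  subst hX
  have haccn := (accPt_iff_nhds).1 hacc
  constructor
  · refine ⟨⟨univ, univ_mem, by simp⟩, ?_, ?_, ?_, ?_⟩
    · rintro f ⟨U, hU, hf⟩ g ⟨V, hV, hg⟩
      exact ⟨U ∩ V, inter_mem hU hV, fun t ht => by
        simp [hf t ht.1, hg t ht.2]⟩
    · rintro c f ⟨U, hU, hf⟩
      exact ⟨U, hU, fun t ht => by simp [hf t ht]⟩
    · rintro f ⟨U, hU, hf⟩ g ⟨V, hV, hg⟩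
      exact ⟨U ∩ V, inter_mem hU hV, fun t ht => by
        simp [ContinuousMap.sup_apply, hf t ht.1, hg t ht.2]⟩
    · rintro f ⟨U, hU, hf⟩ g ⟨V, hV, hg⟩
      exact ⟨U ∩ V, inter_mem hU hV, fun t ht => by
        simp [ContinuousMap.inf_apply, hf t ht.1, hg t ht.2]⟩
  constructor
  · -- properness
    -- enumerate S \ {s₀}
    have hTne : (S \ {s₀}).Nonempty := by
      obtain ⟨y, hy, hy0⟩ := haccn univ univ_mem
      exact ⟨y, hy.2, hy0⟩
    obtain ⟨e, he⟩ := (hS.mono diff_subset).exists_eq_range hTne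
    have he0 : ∀ m, e m ≠ s₀ := fun m => by
      have : e m ∈ S \ {s₀} := he ▸ mem_range_self m
      exact this.2
    -- Urysohn functions
    have hg : ∀ m : ℕ, ∃ g : C(K, ℝ), g s₀ = 0 ∧ g (e m) = 1 ∧ ∀ x, g x ∈ Icc (0:ℝ) 1 := by
      intro m
      obtain ⟨g, hg0, hg1, hg01⟩ :=
        exists_continuous_zero_one_of_isClosed (isClosed_singleton (x := s₀))
          (isClosed_singleton (x := e m)) (by simp [(he0 m).symm])
      exact ⟨g, hg0 rfl, hg1 rfl, hg01⟩
    choose g hg0 hg1 hg01 using hg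
    set F : ℕ → C(K, ℝ) := fun m => ((2:ℝ)⁻¹) ^ (m + 1) • g m with hF
    have hgnorm : ∀ m, ‖g m‖ ≤ 1 := by
      intro m
      refine (ContinuousMap.norm_le _ zero_le_one).2 fun x => ?_
      have := hg01 m x
      rw [Real.norm_eq_abs, abs_le]
      constructor <;> [linarith [this.1]; exact this.2]
    have hFnorm : ∀ m, ‖F m‖ ≤ ((2:ℝ)⁻¹) ^ (m + 1) := by
      intro m
      refine (ContinuousMap.norm_le _ (by positivity)).2 fun x => ?_
      have h01 := hg01 m x
      show ‖((2:ℝ)⁻¹) ^ (m + 1) • g m x‖ ≤ _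
      rw [smul_eq_mul, Real.norm_eq_abs, abs_mul, abs_of_nonneg (by positivity : (0:ℝ) ≤ ((2:ℝ)⁻¹)^(m+1)), abs_of_nonneg h01.1]
      nlinarith [h01.2, (by positivity : (0:ℝ) < ((2:ℝ)⁻¹)^(m+1))]
    have hgeo : Summable fun m : ℕ => ((2:ℝ)⁻¹) ^ (m + 1) := by
      exact (summable_geometric_of_lt_one (by norm_num) (by norm_num)).comp_injective
        (add_left_injective 1)
    have hFsum : Summable F :=
      Summable.of_norm (hgeo.of_nonneg_of_le (fun m => norm_nonneg _) hFnorm)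
    set h : C(K, ℝ) := ∑' m, F m with hh
    have heval : ∀ x : K, h x = ∑' m, F m x := by
      intro x
      have := (ContinuousMap.evalCLM (R := ℝ) x).map_tsum hFsum
      simpa [ContinuousMap.evalCLM] using this
    have hFx : ∀ x : K, Summable fun m => F m x := fun x =>
      hFsum.map (ContinuousMap.evalCLM (R := ℝ) x) (ContinuousLinearMap.continuous _)
    have hhs0 : h s₀ = 0 := by
      rw [heval]
      simp [hF, hg0]
    intro hXuniv
    have hhX : h ∈ {f : C(K, ℝ) | ∃ U ∈ nhds s₀, ∀ t ∈ U, f t = f s₀} := by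
      rw [hXuniv]; trivial
    obtain ⟨U, hU, hconst⟩ := hhX
    obtain ⟨y, hy, hy0⟩ := haccn U hU
    have hyT : y ∈ S \ {s₀} := ⟨hy.2, hy0⟩
    rw [he] at hyT
    obtain ⟨m, hm⟩ := hyT
    have hpos : ((2:ℝ)⁻¹) ^ (m + 1) ≤ h y := by
      rw [heval]
      have : F m y = ((2:ℝ)⁻¹) ^ (m + 1) := by
        show ((2:ℝ)⁻¹) ^ (m + 1) • g m y = _
        rw [← hm, hg1, smul_eq_mul, mul_one]
      rw [← this]
      refine Summable.le_tsum (hFx y) m fun i _ => ?_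
      have := (hg01 i y).1
      simp only [hF, ContinuousMap.smul_apply, smul_eq_mul]
      positivity
    have : h y = 0 := by rw [hconst y hy.1, hhs0]
    rw [this] at hpos
    have : (0:ℝ) < ((2:ℝ)⁻¹) ^ (m + 1) := by positivity
    linarith
  · -- density
    rw [Metric.dense_iff]
    intro f ε hε
    set c : ℝ := f s₀ with hc
    set W : Set K := f ⁻¹' ball c (ε / 2) with hW
    have hWopen : IsOpen W := (isOpen_ball).preimage f.continuous
    have hs₀W : s₀ ∈ W := by simp [hW, hc, hε]
    obtain ⟨C, hCmem, hCclosed, hCW⟩ :=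
      exists_mem_nhds_isClosed_subset (hWopen.mem_nhds hs₀W)
    obtain ⟨φ, hφ0, hφ1, hφ01⟩ :=
      exists_continuous_zero_one_of_isClosed (isClosed_compl_iff.2 hWopen) hCclosed
        (disjoint_compl_left.mono_right hCW)
    set gfun : C(K, ℝ) := f + (ContinuousMap.const K c - f) * φ with hgfun
    have hs₀C : s₀ ∈ C := mem_of_mem_nhds hCmem
    have hgC : ∀ t ∈ C, gfun t = c := by
      intro t ht
      simp [hgfun, hφ1 ht]
    refine ⟨gfun, ?_, ⟨C, hCmem, fun t ht => by rw [hgC t ht, hgC s₀ hs₀C]⟩⟩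
    rw [mem_ball, ContinuousMap.dist_lt_iff hε]
    intro x
    by_cases hx : x ∈ W
    · have hd : dist (f x) c < ε / 2 := by simpa [hW] using hx
      have hφx := hφ01 x
      have : dist (gfun x) (f x) = |c - f x| * φ x := by
        simp only [hgfun, ContinuousMap.add_apply, ContinuousMap.mul_apply,
          ContinuousMap.sub_apply, ContinuousMap.const_apply, Real.dist_eq]
        rw [add_sub_cancel_left, abs_mul, abs_of_nonneg hφx.1]
      rw [this]
      calc |c - f x| * φ x ≤ |c - f x| * 1 :=
            mul_le_mul_of_nonneg_left hφx.2 (abs_nonneg _)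
        _ = dist c (f x) := by rw [mul_one, Real.dist_eq]
        _ = dist (f x) c := dist_comm _ _
        _ < ε / 2 := hd
        _ < ε := by linarith
    · have : φ x = 0 := hφ0 hx
      simp [hgfun, this, hε]
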